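/- Let f ∈ ℂ[x1,…,xn] be an irreducible homogeneous polynomial of degree d ≥ 2, let x_r ∈ Reg(f), let t ∈ ℂ, and set u = t·∇f(x_r). Then for every nonzero λ ∈ ℂ the pair (u + λ·x_r, λ·x_r) satisfies λ·x_r ∈ Reg(f) and (u + λ·x_r) − λ·x_r ∈ ℂ·∇f(λ·x_r); consequently (u, 0) ∈ E_f, and u ∈ DS(f). -/

import Mathlib

open MvPolynomial Pointwise

/-- Gradient of a multivariate polynomial at a point. -/
noncomputable def grad {n : ℕ} (f : MvPolynomial (Fin n) ℂ) (x : Fin n → ℂ) : Fin n → ℂ :=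
  fun i => eval x (pderiv i f)

/-- Zariski closure: zero locus of the ideal of all polynomials vanishing on `S`. -/
def zclosure {σ : Type} (S : Set (σ → ℂ)) : Set (σ → ℂ) :=
  {x | ∀ p : MvPolynomial σ ℂ, (∀ s ∈ S, eval s p = 0) → eval x p = 0}

/-- Zero locus `V(f)`. -/
def Vp {n : ℕ} (f : MvPolynomial (Fin n) ℂ) : Set (Fin n → ℂ) := {x | eval x f = 0}

/-- Regular locus. -/
def RegL {n : ℕ} (f : MvPolynomial (Fin n) ℂ) : Set (Fin n → ℂ) :=
  {x | eval x f = 0 ∧ grad f x ≠ 0}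

/-- Singular locus. -/
def SingL {n : ℕ} (f : MvPolynomial (Fin n) ℂ) : Set (Fin n → ℂ) :=
  {x | eval x f = 0 ∧ grad f x = 0}

/-- ED correspondence: Zariski closure of pairs (u,x), x regular, u - x ∈ ℂ·∇f(x),
encoded as functions on `Fin n ⊕ Fin n`. -/
def EDcorr {n : ℕ} (f : MvPolynomial (Fin n) ℂ) : Set ((Fin n ⊕ Fin n) → ℂ) :=
  zclosure {w | ∃ u x : Fin n → ℂ, w = Sum.elim u x ∧ x ∈ RegL f ∧ ∃ t : ℂ, u - x = t • grad f x}

/-- ED data singular locus. -/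
def DS {n : ℕ} (f : MvPolynomial (Fin n) ℂ) : Set (Fin n → ℂ) :=
  {u | ∃ x, Sum.elim u x ∈ EDcorr f ∧ x ∈ SingL f}

/-- Dual variety. -/
def dualV {n : ℕ} (f : MvPolynomial (Fin n) ℂ) : Set (Fin n → ℂ) :=
  zclosure {y | ∃ (t : ℂ) (x : Fin n → ℂ), x ∈ RegL f ∧ y = t • grad f x}

/-- Isotropic quadric. -/
def isoQ (n : ℕ) : Set (Fin n → ℂ) := {x | ∑ i, (x i) ^ 2 = 0}

/-- ED data isotropic locus. -/
def DI {n : ℕ} (f : MvPolynomial (Fin n) ℂ) : Set (Fin n → ℂ) :=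
  {u | ∃ x, Sum.elim u x ∈ EDcorr f ∧ x ∈ isoQ n ∩ Vp f}

/-- Zariski-closed sets. -/
def IsZClosed {σ : Type} (S : Set (σ → ℂ)) : Prop := zclosure S = S

/-- Irreducibility with respect to Zariski-closed sets. -/
def IsZIrreducible {σ : Type} (S : Set (σ → ℂ)) : Prop :=
  S.Nonempty ∧ ∀ C₁ C₂ : Set (σ → ℂ), IsZClosed C₁ → IsZClosed C₂ →
    S ⊆ C₁ ∪ C₂ → S ⊆ C₁ ∨ S ⊆ C₂

/-- `C` is an irreducible component of `S`. -/
def IsIrredComponentOf {σ : Type} (C S : Set (σ → ℂ)) : Prop :=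
  C ⊆ S ∧ IsZClosed C ∧ IsZIrreducible C ∧
    ∀ C' : Set (σ → ℂ), IsZClosed C' → IsZIrreducible C' → C ⊆ C' → C' ⊆ S → C' = C


/-- Evaluation of a homogeneous polynomial at a scalar multiple. -/
lemma eval_smul_of_isHomogeneous {σ : Type} [Fintype σ] {m : ℕ} {φ : MvPolynomial σ ℂ}
    (hφ : φ.IsHomogeneous m) (c : ℂ) (x : σ → ℂ) :
    eval (c • x) φ = c ^ m * eval x φ := by
  rw [eval_eq, eval_eq, Finset.mul_sum]
  apply Finset.sum_congr rfl
  intro e he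
  have hdeg : e.degree = m := by
    have := hφ (MvPolynomial.mem_support_iff.mp he)
    rw [Finsupp.degree_eq_weight_one]
    exact this
  have : ∏ i ∈ e.support, (c • x) i ^ e i
      = (∏ i ∈ e.support, c ^ e i) * ∏ i ∈ e.support, x i ^ e i := by
    rw [← Finset.prod_mul_distrib]
    exact Finset.prod_congr rfl fun i _ => by simp [mul_pow]
  rw [this, Finset.prod_pow_eq_pow_sum]
  have : ∑ i ∈ e.support, e i = m := hdeg
  rw [this]; ring

/-- The partial derivative of a homogeneous polynomial is homogeneous. -/
lemma isHomogeneous_pderiv {σ : Type} [DecidableEq σ] {m : ℕ} {φ : MvPolynomial σ ℂ}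
    (hφ : φ.IsHomogeneous m) (i : σ) :
    (pderiv i φ).IsHomogeneous (m - 1) := by
  have hrw : pderiv i φ
      = ∑ s ∈ φ.support, monomial (s - Finsupp.single i 1) (coeff s φ * s i) := by
    conv_lhs => rw [φ.as_sum]
    rw [map_sum]
    exact Finset.sum_congr rfl fun s _ => pderiv_monomial
  rw [hrw]
  apply MvPolynomial.IsHomogeneous.sum
  intro s hs
  by_cases h : s i = 0
  · simp [h, isHomogeneous_zero]
  · apply isHomogeneous_monomial
    have hsd : s.degree = m := by
      have := hφ (MvPolynomial.mem_support_iff.mp hs)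
      rw [Finsupp.degree_eq_weight_one]
      exact this
    have hadd : (s - Finsupp.single i 1) + Finsupp.single i 1 = s := by
      rw [Finsupp.sub_single_one_add h]
      simp
    have hdadd : (s - Finsupp.single i 1).degree + (Finsupp.single i 1).degree = s.degree := by
      rw [Finsupp.degree_eq_weight_one, ← map_add, hadd]
    have h1 : (Finsupp.single i 1).degree = 1 := by
      exact Finsupp.degree_single i 1
    omega

/-- Gradient of a homogeneous polynomial at a scalar multiple. -/
lemma grad_smul_of_isHomogeneous {n m : ℕ} {φ : MvPolynomial (Fin n) ℂ}
    (hφ : φ.IsHomogeneous m) (c : ℂ) (x : Fin n → ℂ) :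
    grad φ (c • x) = c ^ (m - 1) • grad φ x := by
  funext i
  simp only [grad, Pi.smul_apply, smul_eq_mul]
  exact eval_smul_of_isHomogeneous (isHomogeneous_pderiv hφ i) c x

/-- For an irreducible homogeneous `f` of degree `d ≥ 2`, a regular point `x_r`, and
`u = t·∇f(x_r)`: for every nonzero `λ`, `λ·x_r` is regular and `(u + λ·x_r) - λ·x_r` is a
scalar multiple of `∇f(λ·x_r)`; consequently `(u, 0) ∈ E_f` and `u ∈ DS(f)`. -/
theorem dual_point_in_DS {n d : ℕ} (hd : 2 ≤ d) (f : MvPolynomial (Fin n) ℂ)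
    (hf : f.IsHomogeneous d) (hirr : Irreducible f)
    (xr : Fin n → ℂ) (hxr : xr ∈ RegL f) (t : ℂ) (u : Fin n → ℂ)
    (hu : u = t • grad f xr) :
    (∀ lam : ℂ, lam ≠ 0 →
      lam • xr ∈ RegL f ∧ ∃ s : ℂ, (u + lam • xr) - lam • xr = s • grad f (lam • xr)) ∧
    Sum.elim u (0 : Fin n → ℂ) ∈ EDcorr f ∧
    u ∈ DS f := by
  obtain ⟨hxr0, hgxr⟩ := hxr
  -- Part 1
  have part1 : ∀ lam : ℂ, lam ≠ 0 →
      lam • xr ∈ RegL f ∧ ∃ s : ℂ, (u + lam • xr) - lam • xr = s • grad f (lam • xr) := by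
    intro lam hlam
    have hgrad : grad f (lam • xr) = lam ^ (d - 1) • grad f xr :=
      grad_smul_of_isHomogeneous hf lam xr
    refine ⟨⟨?_, ?_⟩, ?_⟩
    · rw [eval_smul_of_isHomogeneous hf, hxr0, mul_zero]
    · rw [hgrad]
      intro h
      rcases smul_eq_zero.mp h with h' | h'
      · exact pow_ne_zero _ hlam h'
      · exact hgxr h'
    · refine ⟨t / lam ^ (d - 1), ?_⟩
      rw [add_sub_cancel_right, hgrad, hu, smul_smul,
        div_mul_cancel₀ t (pow_ne_zero _ hlam)]
  refine ⟨part1, ?_⟩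
  -- Part 2: (u, 0) ∈ EDcorr f
  have part2 : Sum.elim u (0 : Fin n → ℂ) ∈ EDcorr f := by
    intro p hp
    set g : ℂ → ℂ := fun lam => eval (Sum.elim (u + lam • xr) (lam • xr)) p with hg
    have hcont : Continuous g := by
      apply (MvPolynomial.continuous_eval p).comp
      apply continuous_pi
      intro j
      cases j <;> · simp only [Sum.elim_inl, Sum.elim_inr]; fun_prop
    have hzero : ∀ lam : ℂ, lam ≠ 0 → g lam = 0 := by
      intro lam hlam
      obtain ⟨hreg, s, hs⟩ := part1 lam hlam
      exact hp _ ⟨u + lam • xr, lam • xr, rfl, hreg, s, hs⟩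
    have hEq : Set.EqOn g (fun _ => (0 : ℂ)) (closure ({0}ᶜ : Set ℂ)) := by
      apply Set.EqOn.closure _ hcont continuous_const
      intro lam hlam
      exact hzero lam hlam
    have h0 : g 0 = 0 := by
      have : (0 : ℂ) ∈ closure ({0}ᶜ : Set ℂ) := by
        rw [(dense_compl_singleton (0 : ℂ)).closure_eq]; trivial
      exact hEq this
    have : Sum.elim u (0 : Fin n → ℂ) = Sum.elim (u + (0 : ℂ) • xr) ((0 : ℂ) • xr) := by
      simp
    rw [this]
    exact h0
  refine ⟨part2, ?_⟩
  -- Part 3: u ∈ DS f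
  refine ⟨0, part2, ?_, ?_⟩
  · have : eval (0 : Fin n → ℂ) f = eval ((0 : ℂ) • xr) f := by simp
    rw [this, eval_smul_of_isHomogeneous hf, zero_pow (by omega), zero_mul]
  · have : grad f (0 : Fin n → ℂ) = grad f ((0 : ℂ) • xr) := by simp
    rw [this, grad_smul_of_isHomogeneous hf, zero_pow (by omega), zero_smul]
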